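/- In a distance-hereditary graph G, let P be a shortest path between s and t, w an arbitrary vertex, a a vertex of the projection Pr(w,P) closest to s, and b a vertex of Pr(w,P) closest to t. Then d(a,b) ≤ 2. -/

import Mathlib

open SimpleGraph

variable {V : Type*}

/-- Distance from a vertex to a set of vertices. -/
noncomputable def setDist (G : SimpleGraph V) (x : V) (S : Set V) : ℕ :=
  sInf (G.dist x '' S)

/-- Eccentricity of a set of vertices. -/
noncomputable def eccSet (G : SimpleGraph V) [Fintype V] (S : Set V) : ℕ :=
  Finset.univ.sup fun v => setDist G v S

/-- Eccentricity of a vertex. -/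
noncomputable def eccV (G : SimpleGraph V) [Fintype V] (v : V) : ℕ :=
  Finset.univ.sup fun u => G.dist v u

/-- Diameter of a graph. -/
noncomputable def diamG (G : SimpleGraph V) [Fintype V] : ℕ :=
  Finset.univ.sup fun v => eccV G v

/-- Projection of a vertex onto a set. -/
def proj (G : SimpleGraph V) (x : V) (S : Set V) : Set V :=
  {u ∈ S | G.dist x u = setDist G x S}

/-- The interval between two vertices. -/
def interval (G : SimpleGraph V) (a b : V) : Set V :=
  {w | G.dist a b = G.dist a w + G.dist w b}

/-- Distance-hereditary: distances in connected induced subgraphs equal distances in `G`. -/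
def DistHereditary (G : SimpleGraph V) : Prop :=
  ∀ S : Set V, (G.induce S).Connected →
    ∀ u v : S, (G.induce S).dist u v = G.dist u.1 v.1

/-- A walk is a shortest path. -/
def IsShortestPath (G : SimpleGraph V) {a b : V} (p : G.Walk a b) : Prop :=
  p.IsPath ∧ p.length = G.dist a b

section DHHelpers

variable {G : SimpleGraph V}

private lemma DH.dist_getVert_le (hconn : G.Connected) {u v : V} (p : G.Walk u v) (i : ℕ) :
    G.dist u (p.getVert i) ≤ i := by
  induction p generalizing i with
  | nil => simp [Walk.getVert, dist_self]
  | @cons a b c h q ih =>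
    cases i with
    | zero => simp [dist_self]
    | succ n =>
      rw [Walk.getVert_cons_succ]
      have t := hconn.dist_triangle (u := a) (v := b) (w := q.getVert n)
      have h1 : G.dist a b ≤ 1 := by simpa using dist_le (Walk.cons h Walk.nil)
      have h2 := ih n
      omega

private lemma DH.dist_getVert_end {u v : V} (p : G.Walk u v) (i : ℕ) :
    G.dist (p.getVert i) v ≤ p.length - i := by
  induction p generalizing i with
  | nil => simp [Walk.getVert, dist_self]
  | @cons a b c h q ih =>
    cases i with
    | zero => simpa using dist_le (Walk.cons h q)
    | succ n =>
      rw [Walk.getVert_cons_succ]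
      have := ih n
      simp only [Walk.length_cons]
      omega

private lemma DH.walk_bound {W : Type*} {H : SimpleGraph W} (g : W → ℕ)
    (hg : ∀ {x y : W}, H.Adj x y → g y ≤ g x + 1) {u v : W} (p : H.Walk u v) :
    g v ≤ g u + p.length := by
  induction p with
  | nil => simp
  | @cons a b c h q ih =>
    have := hg h
    simp only [Walk.length_cons]
    omega

/-- A chord-free path in a distance-hereditary graph is a shortest path
(lower bound form). -/
private lemma DH.core (hconn : G.Connected) (hdh : DistHereditary G) (f : ℕ → V) (L : ℕ)
    (h1 : ∀ i, i < L → G.Adj (f i) (f (i + 1)))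
    (h2 : ∀ i j, i ≤ L → j ≤ L → G.Adj (f i) (f j) → j = i + 1 ∨ i = j + 1)
    (h3 : ∀ i j, i ≤ L → j ≤ L → f i = f j → i = j) :
    L ≤ G.dist (f 0) (f L) := by
  classical
  set S : Set V := {x | ∃ i, i ≤ L ∧ f i = x} with hS
  have memf : ∀ i, i ≤ L → f i ∈ S := fun i hi => ⟨i, hi, rfl⟩
  let φ : S → ℕ := fun x => Classical.choose x.2
  have hφ : ∀ x : S, φ x ≤ L ∧ f (φ x) = x.1 := fun x => Classical.choose_spec x.2
  have hφf : ∀ i (hi : i ≤ L), φ ⟨f i, memf i hi⟩ = i := by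
    intro i hi
    exact h3 _ _ (hφ _).1 hi (hφ _).2
  have hreach : ∀ i (hi : i ≤ L),
      (G.induce S).Reachable ⟨f 0, memf 0 (Nat.zero_le L)⟩ ⟨f i, memf i hi⟩ := by
    intro i
    induction i with
    | zero => intro _; exact Reachable.refl _
    | succ n ih =>
      intro hi
      have hn : n ≤ L := by omega
      have hadj : (G.induce S).Adj ⟨f n, memf n hn⟩ ⟨f (n+1), memf _ hi⟩ :=
        h1 n (by omega)
      exact (ih hn).trans hadj.reachable
  have hconnS : (G.induce S).Connected := by
    rw [connected_iff]
    refine ⟨?_, ⟨⟨f 0, memf 0 (Nat.zero_le L)⟩⟩⟩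
    intro x y
    obtain ⟨i, hi, hx⟩ := x.2
    obtain ⟨j, hj, hy⟩ := y.2
    have ex : x = ⟨f i, memf i hi⟩ := Subtype.ext hx.symm
    have ey : y = ⟨f j, memf j hj⟩ := Subtype.ext hy.symm
    rw [ex, ey]
    exact (hreach i hi).symm.trans (hreach j hj)
  have hd := hdh S hconnS ⟨f 0, memf 0 (Nat.zero_le L)⟩ ⟨f L, memf L le_rfl⟩
  obtain ⟨p, hp⟩ := (hreach L le_rfl).exists_walk_length_eq_dist
  have hlip : ∀ {x y : S}, (G.induce S).Adj x y → φ y ≤ φ x + 1 := by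
    intro x y h
    have hGadj : G.Adj (f (φ x)) (f (φ y)) := by
      rw [(hφ x).2, (hφ y).2]; exact h
    rcases h2 _ _ (hφ x).1 (hφ y).1 hGadj with h' | h' <;> omega
  have hb := DH.walk_bound φ hlip p
  rw [hd] at hp
  rw [hφf 0 (Nat.zero_le L), hφf L le_rfl] at hb
  have hp' : p.length = G.dist (f 0) (f L) := hp
  omega

/-- The key lemma: if `R` is a shortest `a-b` walk all of whose vertices are at
distance at least `k` from `w`, and `d(w,a) = d(w,b) = k`, then `d(a,b) ≤ 2`. -/
private lemma DH.main_aux (hconn : G.Connected) (hdh : DistHereditary G) {a b : V} (w : V)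
    (k : ℕ) (R : G.Walk a b) (hR : R.length = G.dist a b)
    (hwa : G.dist w a = k) (hwb : G.dist w b = k)
    (hfar : ∀ x ∈ R.support, k ≤ G.dist w x) :
    G.dist a b ≤ 2 := by
  classical
  rcases Nat.eq_zero_or_pos k with hk0 | hk
  · subst hk0
    have haw : w = a := (hconn.dist_eq_zero_iff).mp hwa
    have hbw : w = b := (hconn.dist_eq_zero_iff).mp hwb
    rw [← haw, ← hbw, dist_self]
    omega
  · obtain ⟨Q, hQ⟩ := hconn.exists_walk_length_eq_dist w a
    have hQl : Q.length = k := by rw [hQ, hwa]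
    set m := R.length with hm
    have hmd : m = G.dist a b := hR
    have dq : ∀ i, i ≤ k → G.dist w (Q.getVert i) = i := by
      intro i hi
      have h1 := DH.dist_getVert_le hconn Q i
      have h2 := DH.dist_getVert_end Q i
      rw [hQl] at h2
      have h3 := hconn.dist_triangle (u := w) (v := Q.getVert i) (w := a)
      omega
    have dra : ∀ j, j ≤ m → G.dist a (R.getVert j) = j := by
      intro j hj
      have h1 := DH.dist_getVert_le hconn R j
      have h2 := DH.dist_getVert_end R j
      have h3 := hconn.dist_triangle (u := a) (v := R.getVert j) (w := b)
      omega
    have drw : ∀ j, j ≤ m → k ≤ G.dist w (R.getVert j) := by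
      intro j hj
      exact hfar _ (Walk.mem_support_iff_exists_getVert.mpr ⟨j, rfl, hj⟩)
    set x := Q.getVert (k - 1) with hx
    set Pr : ℕ → Prop := fun j => G.Adj x (R.getVert j) with hPr
    have hP0 : Pr 0 := by
      have h1 : G.Adj (Q.getVert (k-1)) (Q.getVert (k-1+1)) :=
        Q.adj_getVert_succ (by omega)
      have h2 : k - 1 + 1 = k := by omega
      rw [h2] at h1
      have h3 : Q.getVert k = a := by rw [← hQl]; exact Q.getVert_length
      rw [h3] at h1
      simpa [hPr, Walk.getVert_zero] using h1
    set j0 := Nat.findGreatest Pr m with hj0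
    have hj0m : j0 ≤ m := Nat.findGreatest_le m
    have hj0adj : Pr j0 := Nat.findGreatest_spec (Nat.zero_le m) hP0
    set L := k + (m - j0) with hL
    set f : ℕ → V := fun i => if i < k then Q.getVert i else R.getVert (j0 + (i - k)) with hf
    have hfq : ∀ i, i < k → f i = Q.getVert i := by intro i hi; simp [hf, hi]
    have hfr : ∀ i, k ≤ i → f i = R.getVert (j0 + (i - k)) := by
      intro i hi; simp [hf, Nat.not_lt.mpr hi]
    have hidx : ∀ i, k ≤ i → i ≤ L → j0 + (i - k) ≤ m := by intro i h1 h2; omega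
    have hdwq : ∀ i, i < k → G.dist w (f i) = i := by
      intro i hi; rw [hfq i hi]; exact dq i (by omega)
    have hdar : ∀ i, k ≤ i → i ≤ L → G.dist a (f i) = j0 + (i - k) := by
      intro i h1 h2; rw [hfr i h1]; exact dra _ (hidx i h1 h2)
    have hdwr : ∀ i, k ≤ i → i ≤ L → k ≤ G.dist w (f i) := by
      intro i h1 h2; rw [hfr i h1]; exact drw _ (hidx i h1 h2)
    have h1 : ∀ i, i < L → G.Adj (f i) (f (i + 1)) := by
      intro i hiL
      by_cases hik : i + 1 < k
      · rw [hfq i (by omega), hfq (i+1) hik]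
        exact Q.adj_getVert_succ (by omega)
      · by_cases hik2 : i + 1 = k
        · rw [hfq i (by omega), hfr (i+1) (by omega)]
          have e1 : i = k - 1 := by omega
          have e2 : j0 + (i + 1 - k) = j0 := by omega
          rw [e2, e1]
          exact hj0adj
        · have hki : k ≤ i := by omega
          rw [hfr i hki, hfr (i+1) (by omega)]
          have e : j0 + (i + 1 - k) = (j0 + (i - k)) + 1 := by omega
          rw [e]
          exact R.adj_getVert_succ (by omega)
    have mixed : ∀ i j, i < k → k ≤ j → j ≤ L → G.Adj (f i) (f j) → j = i + 1 := by
      intro i j hi hkj hjL hadj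
      have d1 : G.dist w (f i) = i := hdwq i hi
      have d2 : k ≤ G.dist w (f j) := hdwr j hkj hjL
      have dadj : G.dist (f i) (f j) = 1 := dist_eq_one_iff_adj.mpr hadj
      have tri := hconn.dist_triangle (u := w) (v := f i) (w := f j)
      have hik1 : i = k - 1 := by omega
      have hfix : f i = x := by rw [hfq i hi, hik1]
      have hadj' : Pr (j0 + (j - k)) := by
        rw [hPr]
        have := hadj
        rw [hfix, hfr j hkj] at this
        exact this
      have hle : j0 + (j - k) ≤ j0 := by
        by_contra hcon
        exact Nat.findGreatest_is_greatest (by omega) (hidx j hkj hjL) hadj'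
      omega
    have h2 : ∀ i j, i ≤ L → j ≤ L → G.Adj (f i) (f j) → j = i + 1 ∨ i = j + 1 := by
      intro i j hiL hjL hadj
      have hne : i ≠ j := by
        intro he; subst he; exact G.loopless.irrefl _ hadj
      have dadj : G.dist (f i) (f j) = 1 := dist_eq_one_iff_adj.mpr hadj
      by_cases hi : i < k <;> by_cases hj : j < k
      · have d1 := hdwq i hi
        have d2 := hdwq j hj
        have t1 := hconn.dist_triangle (u := w) (v := f i) (w := f j)
        have t2 := hconn.dist_triangle (u := w) (v := f j) (w := f i)
        have dc : G.dist (f j) (f i) = 1 := by rwa [SimpleGraph.dist_comm] at dadj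
        omega
      · exact Or.inl (mixed i j hi (by omega) hjL hadj)
      · exact Or.inr (mixed j i hj (by omega) hiL hadj.symm)
      · have d1 := hdar i (by omega) hiL
        have d2 := hdar j (by omega) hjL
        have t1 := hconn.dist_triangle (u := a) (v := f i) (w := f j)
        have t2 := hconn.dist_triangle (u := a) (v := f j) (w := f i)
        have dc : G.dist (f j) (f i) = 1 := by rwa [SimpleGraph.dist_comm] at dadj
        omega
    have h3 : ∀ i j, i ≤ L → j ≤ L → f i = f j → i = j := by
      intro i j hiL hjL he
      by_cases hi : i < k <;> by_cases hj : j < k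
      · have d1 := hdwq i hi
        have d2 := hdwq j hj
        rw [he] at d1
        omega
      · have d1 := hdwq i hi
        have d2 := hdwr j (by omega) hjL
        rw [he] at d1
        omega
      · have d1 := hdwq j hj
        have d2 := hdwr i (by omega) hiL
        rw [← he] at d1
        omega
      · have d1 := hdar i (by omega) hiL
        have d2 := hdar j (by omega) hjL
        rw [he] at d1
        omega
    have hcore := DH.core hconn hdh f L h1 h2 h3
    have hf0 : f 0 = w := by
      rw [hfq 0 hk]
      exact Q.getVert_zero
    have hfL : f L = b := by
      rw [hfr L (by omega)]
      have e : j0 + (L - k) = m := by omega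
      rw [e, hm]
      exact R.getVert_length
    rw [hf0, hfL, hwb] at hcore
    have hj0eq : j0 = m := by omega
    have hxa : G.Adj x a := by
      have := hP0
      rwa [hPr, Walk.getVert_zero] at this
    have hxb : G.Adj x b := by
      have := hj0adj
      rw [hPr, hj0eq] at this
      have e : R.getVert m = b := by rw [hm]; exact R.getVert_length
      rwa [e] at this
    have t := hconn.dist_triangle (u := a) (v := x) (w := b)
    have d1 : G.dist a x = 1 := by rw [SimpleGraph.dist_comm]; exact dist_eq_one_iff_adj.mpr hxa
    have d2 : G.dist x b = 1 := dist_eq_one_iff_adj.mpr hxb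
    omega

/-- Prefix/suffix of a shortest walk is shortest. -/
private lemma DH.take_drop_shortest [DecidableEq V] (hconn : G.Connected) {u v : V} (p : G.Walk u v)
    (hp : p.length = G.dist u v) {x : V} (hx : x ∈ p.support) :
    (p.takeUntil x hx).length = G.dist u x ∧ (p.dropUntil x hx).length = G.dist x v := by
  have hsum : (p.takeUntil x hx).length + (p.dropUntil x hx).length = p.length := by
    rw [← Walk.length_append, Walk.take_spec]
  have h1 := dist_le (p.takeUntil x hx)
  have h2 := dist_le (p.dropUntil x hx)
  have h3 := hconn.dist_triangle (u := u) (v := x) (w := v)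
  omega

end DHHelpers

theorem stmt_1 {V : Type*} [Fintype V] (G : SimpleGraph V) (hconn : G.Connected)
    (hdh : DistHereditary G) (s t w a b : V) (P : G.Walk s t) (hP : IsShortestPath G P)
    (ha : a ∈ proj G w {v | v ∈ P.support})
    (hb : b ∈ proj G w {v | v ∈ P.support})
    (haClosest : ∀ u ∈ proj G w {v | v ∈ P.support}, G.dist s a ≤ G.dist s u)
    (hbClosest : ∀ u ∈ proj G w {v | v ∈ P.support}, G.dist t b ≤ G.dist t u) :
    G.dist a b ≤ 2 := by
  classical
  obtain ⟨haP, haD⟩ := ha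
  obtain ⟨hbP, hbD⟩ := hb
  set k := setDist G w {v | v ∈ P.support} with hk
  have haP' : a ∈ P.support := haP
  have hbP' : b ∈ P.support := hbP
  have hfarP : ∀ x ∈ P.support, k ≤ G.dist w x := by
    intro x hx
    exact Nat.sInf_le ⟨x, hx, rfl⟩
  have hbPs : b ∈ ((P.takeUntil a haP').append (P.dropUntil a haP')).support := by
    rw [Walk.take_spec]; exact hbP'
  have hta := DH.take_drop_shortest hconn P hP.2 haP'
  rcases (Walk.mem_support_append_iff _ _).mp hbPs with hb1 | hb2
  · -- b occurs before a on P
    have h1 := DH.take_drop_shortest hconn (P.takeUntil a haP') hta.1 hb1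
    have hsub : ∀ x ∈ ((P.takeUntil a haP').dropUntil b hb1).support, x ∈ P.support := by
      intro x hx
      exact Walk.support_takeUntil_subset P haP' (Walk.support_dropUntil_subset _ hb1 hx)
    rw [SimpleGraph.dist_comm]
    exact DH.main_aux hconn hdh w k ((P.takeUntil a haP').dropUntil b hb1) h1.2 hbD haD
      (fun x hx => hfarP x (hsub x hx))
  · -- b occurs after a on P
    have h1 := DH.take_drop_shortest hconn (P.dropUntil a haP') hta.2 hb2
    have hsub : ∀ x ∈ ((P.dropUntil a haP').takeUntil b hb2).support, x ∈ P.support := by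
      intro x hx
      exact Walk.support_dropUntil_subset P haP' (Walk.support_takeUntil_subset _ hb2 hx)
    exact DH.main_aux hconn hdh w k ((P.dropUntil a haP').takeUntil b hb2) h1.1 haD hbD
      (fun x hx => hfarP x (hsub x hx))
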